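/- Let θ be a root of unity (in a fixed algebraic closure of ℚ) with θ^6 ≠ 1, and let (a, b) be a pair of rational numbers different from the five pairs (0,0), (1,0), (−1,0), (0,1), (0,−1). Then α = a + bθ is nonzero and α is not a root of unity. -/

import Mathlib

lemma aux_int_of_pow_eq_one {z : ℂ} {n : ℕ} (hn : 0 < n) (h : z ^ n = 1) : IsIntegral ℤ z :=
  ⟨Polynomial.X ^ n - 1, by simpa using Polynomial.monic_X_pow_sub_C (1:ℤ) hn.ne', by simp [h]⟩

lemma aux_pow_eq_one_nonneg {x : ℝ} {n : ℕ} (hn : 0 < n) (hx : 0 ≤ x) (h : x ^ n = 1) : x = 1 := by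
  rcases lt_trichotomy x 1 with h1 | h1 | h1
  · nlinarith [pow_lt_one₀ hx h1 hn.ne']
  · exact h1
  · nlinarith [one_lt_pow₀ h1 hn.ne']

lemma aux_abs_one {z : ℂ} {n : ℕ} (hn : 0 < n) (h : z ^ n = 1) : ‖z‖ = 1 := by
  apply aux_pow_eq_one_nonneg hn (norm_nonneg z)
  rw [← norm_pow, h, norm_one]

lemma aux_rat_pm_one {r : ℚ} {n : ℕ} (hn : 0 < n) (h : (r:ℂ) ^ n = 1) : r = 1 ∨ r = -1 := by
  have h2 : ((|r| : ℚ) : ℝ) ^ n = 1 := by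
    push_cast
    rw [← abs_pow]
    have : (r:ℝ)^n = 1 := by exact_mod_cast h
    rw [this, abs_one]
  have h3 : ((|r| : ℚ) : ℝ) = 1 := aux_pow_eq_one_nonneg hn (by positivity) h2
  have h4 : |r| = 1 := by exact_mod_cast h3
  exact abs_eq (by norm_num) |>.mp h4

lemma aux_rat_int {t : ℚ} (h : IsIntegral ℤ ((t:ℂ))) : ∃ z : ℤ, (z : ℚ) = t := by
  have h1 : IsIntegral ℤ t := by
    have h2 : IsIntegral ℤ (algebraMap ℚ ℂ t) := by simpa using h
    exact (isIntegral_algebraMap_iff (algebraMap ℚ ℂ).injective).mp h2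
  obtain ⟨z, hz⟩ := IsIntegrallyClosed.isIntegral_iff.mp h1
  exact ⟨z, by simpa using hz⟩

theorem stmt1 (θ : ℂ) (hθ : ∃ n : ℕ, 0 < n ∧ θ ^ n = 1) (hθ6 : θ ^ 6 ≠ 1)
    (a b : ℚ)
    (hab : (a, b) ≠ (0, 0) ∧ (a, b) ≠ (1, 0) ∧ (a, b) ≠ (-1, 0) ∧
      (a, b) ≠ (0, 1) ∧ (a, b) ≠ (0, -1)) :
    (a : ℂ) + (b : ℂ) * θ ≠ 0 ∧
      ∀ n : ℕ, 0 < n → ((a : ℂ) + (b : ℂ) * θ) ^ n ≠ 1 := by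
  obtain ⟨m, hm, hθm⟩ := hθ
  have habsθ : ‖θ‖ = 1 := aux_abs_one hm hθm
  have hθ0 : θ ≠ 0 := by
    intro h; rw [h] at hθm; simp [zero_pow hm.ne'] at hθm
  have hinv : θ * θ⁻¹ = 1 := mul_inv_cancel₀ hθ0
  have hconjθ : (starRingEnd ℂ) θ = θ⁻¹ := (Complex.inv_eq_conj habsθ).symm
  constructor
  · intro h0
    by_cases hb : b = 0
    · subst hb
      have ha : a = 0 := by
        have : (a:ℂ) = 0 := by simpa using h0
        exact_mod_cast this
      exact hab.1 (by rw [ha])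
    · have hBC : (b:ℂ) ≠ 0 := by exact_mod_cast hb
      have hθeq : θ = ((-a/b : ℚ) : ℂ) := by
        push_cast
        rw [eq_div_iff hBC]
        linear_combination h0
      have hrm : ((-a/b : ℚ) : ℂ) ^ m = 1 := by rw [← hθeq]; exact hθm
      rcases aux_rat_pm_one hm hrm with h1 | h1 <;>
        · apply hθ6
          rw [hθeq, h1]; norm_num
  · intro n hn hα1
    have habsα : ‖(a:ℂ) + (b:ℂ)*θ‖ = 1 := aux_abs_one hn hα1
    have hmul : ((a:ℂ) + (b:ℂ)*θ) * (starRingEnd ℂ) ((a:ℂ) + (b:ℂ)*θ) = 1 := by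
      rw [Complex.mul_conj, Complex.normSq_eq_norm_sq, habsα]; norm_num
    have hconjα : (starRingEnd ℂ) ((a:ℂ) + (b:ℂ)*θ) = (a:ℂ) + (b:ℂ)*θ⁻¹ := by
      rw [map_add, map_mul, hconjθ, map_ratCast, map_ratCast]
    have hkey : (a:ℂ)^2 + (b:ℂ)^2 + (a:ℂ)*(b:ℂ)*(θ + θ⁻¹) = 1 := by
      rw [hconjα] at hmul
      linear_combination hmul - (b:ℂ)^2 * hinv
    by_cases hb : b = 0
    · have hαa : ((a:ℂ))^n = 1 := by rw [hb] at hα1; push_cast at hα1; simpa using hα1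
      rcases aux_rat_pm_one hn hαa with h1 | h1
      · exact hab.2.1 (by rw [h1, hb])
      · exact hab.2.2.1 (by rw [h1, hb])
    by_cases ha : a = 0
    · have habs2 : ‖(b:ℂ)‖ = 1 := by
        rw [ha] at habsα
        have : ‖(b:ℂ)*θ‖ = 1 := by simpa using habsα
        rwa [norm_mul, habsθ, mul_one] at this
      have hb1 : |b| = 1 := by
        have h2 : |(b:ℝ)| = 1 := by
          rw [← Real.norm_eq_abs, ← Complex.norm_real]
          have : ((b:ℝ):ℂ) = (b:ℂ) := by push_cast; ring
          rw [this]; exact habs2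
        exact_mod_cast h2
      rcases abs_eq (by norm_num : (0:ℚ) ≤ 1) |>.mp hb1 with h1 | h1
      · exact hab.2.2.2.1 (by rw [h1, ha])
      · exact hab.2.2.2.2 (by rw [h1, ha])
    have hA : (a:ℂ) ≠ 0 := by exact_mod_cast ha
    have hB : (b:ℂ) ≠ 0 := by exact_mod_cast hb
    have hsum : θ + θ⁻¹ = (((1 - a^2 - b^2)/(a*b) : ℚ):ℂ) := by
      push_cast
      rw [eq_div_iff (mul_ne_zero hA hB)]
      linear_combination hkey
    have hint : IsIntegral ℤ ((((1 - a^2 - b^2)/(a*b) : ℚ):ℂ)) := by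
      rw [← hsum]
      exact (aux_int_of_pow_eq_one hm hθm).add
        (aux_int_of_pow_eq_one hm (by rw [inv_pow, hθm, inv_one]))
    obtain ⟨z, hz⟩ := aux_rat_int hint
    have hzsum : θ + θ⁻¹ = (z:ℂ) := by
      rw [hsum, ← hz]; push_cast; ring
    have hq : θ^2 + 1 = (z:ℂ)*θ := by linear_combination θ * hzsum - hinv
    have hzabs : ‖(z:ℂ)‖ ≤ 2 := by
      rw [← hzsum]
      calc ‖θ + θ⁻¹‖ ≤ ‖θ‖ + ‖θ⁻¹‖ := norm_add_le _ _
      _ = 2 := by rw [norm_inv, habsθ]; norm_num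
    have hzb : -2 ≤ z ∧ z ≤ 2 := by
      have h1 : |(z:ℝ)| ≤ 2 := by rwa [← Complex.norm_intCast]
      have h2 : |z| ≤ 2 := by exact_mod_cast h1
      exact abs_le.mp h2
    obtain ⟨hzb1, hzb2⟩ := hzb
    interval_cases z <;> push_cast at hq
    · -- z = -2
      have h2 : (θ+1)^2 = 0 := by linear_combination hq
      have h3 : θ = -1 := by
        have := pow_eq_zero_iff (two_ne_zero) |>.mp h2
        linear_combination this
      exact hθ6 (by rw [h3]; norm_num)
    · -- z = -1
      exact hθ6 (by linear_combination ((θ-1)*(θ^3+1))*hq)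
    · -- z = 0
      have hθ2 : θ^2 = -1 := by linear_combination hq
      have hmone : θ * -θ = 1 := by linear_combination -hθ2
      have hinvθ : θ⁻¹ = -θ := (eq_inv_of_mul_eq_one_right hmone).symm
      have hsum0 : θ + θ⁻¹ = 0 := by simpa using hzsum
      have hab1 : a^2 + b^2 = 1 := by
        have hcc : ((a^2 + b^2 : ℚ) : ℂ) = ((1:ℚ):ℂ) := by
          push_cast
          linear_combination hkey - (a:ℂ)*(b:ℂ)*hsum0
        exact_mod_cast hcc
      have hconjθ2 : (starRingEnd ℂ) θ = -θ := by rw [hconjθ, hinvθ]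
      have hconjα2 : (starRingEnd ℂ) ((a:ℂ)+(b:ℂ)*θ) = (a:ℂ) - (b:ℂ)*θ := by
        rw [map_add, map_mul, hconjθ2, map_ratCast, map_ratCast]; ring
      have h2a : ∃ p : ℤ, (p:ℚ) = 2*a := by
        apply aux_rat_int
        have he : ((2*a : ℚ) : ℂ) = ((a:ℂ)+(b:ℂ)*θ) + ((a:ℂ) - (b:ℂ)*θ) := by push_cast; ring
        rw [he]
        refine (aux_int_of_pow_eq_one hn hα1).add ?_
        rw [← hconjα2]
        exact aux_int_of_pow_eq_one hn (by rw [← map_pow, hα1, map_one])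
      have hβ : (b:ℂ) - (a:ℂ)*θ = -((((a:ℂ)+(b:ℂ)*θ)) * θ) := by
        linear_combination (b:ℂ) * hθ2
      have hα4 : (((a:ℂ)+(b:ℂ)*θ)) ^ (4*m*n) = 1 := by
        rw [show 4*m*n = n*(4*m) by ring, pow_mul, hα1, one_pow]
      have hθ4 : θ ^ (4*m*n) = 1 := by
        rw [show 4*m*n = m*(4*n) by ring, pow_mul, hθm, one_pow]
      have hmn : 0 < 4*m*n := by positivity
      have hβpow : ((b:ℂ) - (a:ℂ)*θ) ^ (4*m*n) = 1 := by
        rw [hβ, Even.neg_pow ⟨2*m*n, by ring⟩, mul_pow, hα4, hθ4, mul_one]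
      have h2b : ∃ q : ℤ, (q:ℚ) = 2*b := by
        apply aux_rat_int
        have hconjβ : (starRingEnd ℂ) ((b:ℂ) - (a:ℂ)*θ) = (b:ℂ) + (a:ℂ)*θ := by
          rw [map_sub, map_mul, hconjθ2, map_ratCast, map_ratCast]; ring
        have he : ((2*b : ℚ) : ℂ) = ((b:ℂ)-(a:ℂ)*θ) + ((b:ℂ) + (a:ℂ)*θ) := by push_cast; ring
        rw [he]
        refine (aux_int_of_pow_eq_one hmn hβpow).add ?_
        rw [← hconjβ]
        exact aux_int_of_pow_eq_one hmn (by rw [← map_pow, hβpow, map_one])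
      obtain ⟨p, hp⟩ := h2a
      obtain ⟨q, hq2⟩ := h2b
      have hpq : p*p + q*q = 4 := by
        have hcc : (p:ℚ)*(p:ℚ) + (q:ℚ)*(q:ℚ) = 4 := by rw [hp, hq2]; nlinarith [hab1]
        exact_mod_cast hcc
      have ha' : a = (p:ℚ)/2 := by rw [hp]; ring
      have hb' : b = (q:ℚ)/2 := by rw [hq2]; ring
      have hpb1 : -2 ≤ p := by nlinarith
      have hpb2 : p ≤ 2 := by nlinarith
      have hqb1 : -2 ≤ q := by nlinarith
      have hqb2 : q ≤ 2 := by nlinarith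
      have hcases : (p = 0 ∧ q = 2) ∨ (p = 0 ∧ q = -2) ∨ (p = 2 ∧ q = 0) ∨ (p = -2 ∧ q = 0) := by
        interval_cases p <;> interval_cases q <;> omega
      rcases hcases with ⟨h1,h2⟩|⟨h1,h2⟩|⟨h1,h2⟩|⟨h1,h2⟩
      · subst h1; subst h2; norm_num at ha' hb'
        exact hab.2.2.2.1 (by rw [ha', hb'])
      · subst h1; subst h2; norm_num at ha' hb'
        exact hab.2.2.2.2 (by rw [ha', hb'])
      · subst h1; subst h2; norm_num at ha' hb'
        exact hab.2.1 (by rw [ha', hb'])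
      · subst h1; subst h2; norm_num at ha' hb'
        exact hab.2.2.1 (by rw [ha', hb'])
    · -- z = 1
      exact hθ6 (by linear_combination ((θ+1)*(θ^3-1))*hq)
    · -- z = 2
      have h2 : (θ-1)^2 = 0 := by linear_combination hq
      have h3 : θ = 1 := by
        have := pow_eq_zero_iff (two_ne_zero) |>.mp h2
        linear_combination this
      exact hθ6 (by rw [h3]; norm_num)
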